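/- The map p ↦ r_p is a bijection from the set of admissible paths in P_{a,b} onto the RSOS path space R_{a,b}. -/
import Mathlib


namespace Stmt9

/-- The ground-state path value `\bar p(s; a, b)`. -/
def barp (m n a b : ℤ) (s : ℕ) : ℤ :=
  if s % 2 = 1 then n - b else if s % 4 = 0 then a + b else m - n - a + b

/-- Membership in the path space `P_{a,b}` (sequences indexed by `s ≥ 1`, represented by
functions on `ℕ` vanishing at `0`). -/
def IsPath (m n a b : ℤ) (p : ℕ → ℤ) : Prop :=
  p 0 = 0 ∧
  (∀ s : ℕ, 1 ≤ s → 0 ≤ p s ∧ p s ≤ (if s % 2 = 1 then n else m)) ∧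
  ∃ S : ℕ, ∀ s ≥ S, p s = barp m n a b s

/-- The eventual (ground-state) weight sequence `ā(s)`. -/
def abar (m n a b : ℤ) (s : ℕ) : ℤ :=
  if s % 4 = 1 then a + b
  else if s % 4 = 2 then n + a - b
  else if s % 4 = 3 then m - n - a + b
  else m - a - b

/-- `A` is the weight sequence `a_p` attached to the path `p`. -/
def IsWeightSeq (m n a b : ℤ) (p A : ℕ → ℤ) : Prop :=
  (∀ s : ℕ, 1 ≤ s → A s = A (s + 1) + (if s % 2 = 1 then n else m) - 2 * p s) ∧
  ∃ S : ℕ, ∀ s ≥ S, A s = abar m n a b s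

/-- `p` is an admissible path of `P_{a,b}`. -/
def IsAdmissiblePath (m n a b : ℤ) (p : ℕ → ℤ) : Prop :=
  IsPath m n a b p ∧
  ∃ A : ℕ → ℤ, IsWeightSeq m n a b p A ∧
    ∀ s : ℕ, 1 ≤ s →
      p s ≤ A (s + 1) ∧ (if s % 2 = 1 then n else m) - p s ≤ m - A (s + 1)

/-- Membership in the RSOS path space `R_{a,b}` (again represented by functions on `ℕ`
vanishing at `0`). -/
def InRSOS (m n a b : ℤ) (r : ℕ → ℤ) : Prop :=
  r 0 = 0 ∧
  (∀ s : ℕ, 1 ≤ s → 0 ≤ r s ∧ r s ≤ m) ∧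
  (∀ s : ℕ, 1 ≤ s → ∃ j : ℤ, 0 ≤ j ∧ j ≤ n ∧ r (s + 1) - r s = -n + 2 * j) ∧
  (∀ s : ℕ, 1 ≤ s → n ≤ r (s + 1) + r s ∧ r (s + 1) + r s ≤ 2 * m - n) ∧
  ∃ S : ℕ, ∀ s ≥ S, r s = if s % 2 = 1 then a + b else a + n - b

/-- `r` is the RSOS path `r_p` read off from the path `p`:
`r_p(s) = a_p(2s-1)` for odd `s` and `m - a_p(2s-1)` for even `s`. -/
def RelR (m n a b : ℤ) (p r : ℕ → ℤ) : Prop :=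
  r 0 = 0 ∧
  ∃ A : ℕ → ℤ, IsWeightSeq m n a b p A ∧
    ∀ s : ℕ, 1 ≤ s →
      r s = if s % 2 = 1 then A (2 * s - 1) else m - A (2 * s - 1)


section
variable (m n a b : ℤ)

lemma weight_unique {p A A' : ℕ → ℤ} (hA : IsWeightSeq m n a b p A)
    (hA' : IsWeightSeq m n a b p A') {s : ℕ} (hs : 1 ≤ s) : A s = A' s := by
  obtain ⟨hrec, S, hS⟩ := hA
  obtain ⟨hrec', S', hS'⟩ := hA'
  have key : ∀ k, A (s + k) - A' (s + k) = A s - A' s := by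
    intro k
    induction k with
    | zero => rfl
    | succ k ih =>
      have h1 := hrec (s + k) (by omega)
      have h2 := hrec' (s + k) (by omega)
      set C : ℤ := if (s + k) % 2 = 1 then n else m with hC
      have : s + (k + 1) = (s + k) + 1 := by omega
      rw [this]
      linarith
  have h := key (S + S')
  rw [hS (s + (S + S')) (by omega), hS' (s + (S + S')) (by omega)] at h
  linarith

lemma adm_facts {p A : ℕ → ℤ} (hp : IsPath m n a b p)
    (hA : IsWeightSeq m n a b p A)
    (hc : ∀ s : ℕ, 1 ≤ s → p s ≤ A (s + 1) ∧ (if s % 2 = 1 then n else m) - p s ≤ m - A (s + 1)) :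
    ∀ s : ℕ, 1 ≤ s →
      p (2*s) = A (2*s+1) ∧
      A (2*s) = m - A (2*s+1) ∧
      A (2*s-1) + A (2*s+1) = m + n - 2 * p (2*s-1) ∧
      0 ≤ A (2*s-1) ∧ A (2*s-1) ≤ m ∧
      A (2*s+1) - A (2*s-1) ≤ m - n ∧ A (2*s-1) - A (2*s+1) ≤ m - n := by
  intro s hs
  obtain ⟨hp0, hpb, _⟩ := hp
  obtain ⟨hrec, _⟩ := hA
  have hce := hc (2*s) (by omega)
  rw [if_neg (by omega)] at hce
  have hpeq : p (2*s) = A (2*s+1) := by linarith [hce.1, hce.2]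
  have hre := hrec (2*s) (by omega)
  rw [if_neg (by omega)] at hre
  have hA2 : A (2*s) = m - A (2*s+1) := by linarith
  have hro := hrec (2*s-1) (by omega)
  rw [if_pos (by omega), show 2*s-1+1 = 2*s from by omega] at hro
  have hsum : A (2*s-1) + A (2*s+1) = m + n - 2 * p (2*s-1) := by linarith
  have hbo := hpb (2*s-1) (by omega)
  rw [if_pos (by omega)] at hbo
  have hco := hc (2*s-1) (by omega)
  rw [if_pos (by omega), show 2*s-1+1 = 2*s from by omega] at hco
  obtain ⟨hc1, hc2⟩ := hco
  refine ⟨hpeq, hA2, hsum, by linarith, by linarith, by linarith, by linarith⟩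


lemma part1 (p : ℕ → ℤ) (hadm : IsAdmissiblePath m n a b p) :
    ∃! r : ℕ → ℤ, InRSOS m n a b r ∧ RelR m n a b p r := by
  obtain ⟨hpath, A, hA, hc⟩ := hadm
  have F := adm_facts m n a b hpath hA hc
  have hpb := hpath.2.1
  refine ⟨fun s => if s = 0 then 0 else if s % 2 = 1 then A (2*s-1) else m - A (2*s-1),
    ⟨⟨by simp, ?_, ?_, ?_, ?_⟩, by simp, A, hA, ?_⟩, ?_⟩
  · -- bounds
    intro s hs
    obtain ⟨_, _, _, h0, h1, _, _⟩ := F s hs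
    simp only [if_neg (show ¬ s = 0 by omega)]
    split <;> constructor <;> linarith
  · -- step
    intro s hs
    obtain ⟨_, _, hsum, _⟩ := F s hs
    have hbo := hpb (2*s-1) (by omega)
    rw [if_pos (by omega)] at hbo
    simp only [if_neg (show ¬ s = 0 by omega), if_neg (show ¬ s + 1 = 0 by omega),
      show 2*(s+1)-1 = 2*s+1 from by omega]
    rcases Nat.mod_two_eq_zero_or_one s with h2 | h2
    · rw [if_pos (by omega), if_neg (by omega)]
      exact ⟨n - p (2*s-1), by linarith, by linarith, by linarith⟩
    · rw [if_neg (by omega), if_pos (by omega)]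
      exact ⟨p (2*s-1), by linarith, by linarith, by linarith⟩
  · -- sums
    intro s hs
    obtain ⟨_, _, _, _, _, hd1, hd2⟩ := F s hs
    simp only [if_neg (show ¬ s = 0 by omega), if_neg (show ¬ s + 1 = 0 by omega),
      show 2*(s+1)-1 = 2*s+1 from by omega]
    rcases Nat.mod_two_eq_zero_or_one s with h2 | h2
    · rw [if_pos (by omega), if_neg (by omega)]
      constructor <;> linarith
    · rw [if_neg (by omega), if_pos (by omega)]
      constructor <;> linarith
  · -- eventual
    obtain ⟨S, hS⟩ := hA.2
    refine ⟨2*S + 2, fun s hs => ?_⟩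
    have hAe := hS (2*s-1) (by omega)
    simp only [if_neg (show ¬ s = 0 by omega)]
    rcases Nat.mod_two_eq_zero_or_one s with h2 | h2
    · rw [if_neg (by omega), if_neg (by omega)]
      simp only [abar, show (2*s-1) % 4 = 3 from by omega] at hAe
      norm_num at hAe
      rw [hAe]; ring
    · rw [if_pos (by omega), if_pos (by omega)]
      simp only [abar, show (2*s-1) % 4 = 1 from by omega] at hAe
      norm_num at hAe
      exact hAe
  · -- RelR relation
    intro s hs
    simp only [if_neg (show ¬ s = 0 by omega)]
  · -- uniqueness
    rintro r' ⟨hr'R, hr'0, A', hA', hr'rel⟩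
    funext s
    rcases Nat.eq_zero_or_pos s with rfl | hs
    · simpa using hr'0
    · have hAA : A' (2*s-1) = A (2*s-1) := weight_unique m n a b hA' hA (by omega)
      rw [hr'rel s hs, hAA]
      simp only [if_neg (show ¬ s = 0 by omega)]

lemma part2 (r : ℕ → ℤ) (hr : InRSOS m n a b r) :
    ∃! p : ℕ → ℤ, IsAdmissiblePath m n a b p ∧ RelR m n a b p r := by
  obtain ⟨hr0, hrb, hrstep, hrsum, S, hS⟩ := hr
  set u : ℕ → ℤ := fun s => if s % 2 = 1 then r s else m - r s with hu
  have huodd : ∀ s, s % 2 = 1 → u s = r s := by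
    intro s h; simp only [hu]; rw [if_pos h]
  have hueven : ∀ s, s % 2 = 0 → u s = m - r s := by
    intro s h; simp only [hu]; rw [if_neg (by omega)]
  have hub : ∀ s, 1 ≤ s → 0 ≤ u s ∧ u s ≤ m := by
    intro s hs
    have h := hrb s hs
    rcases Nat.mod_two_eq_zero_or_one s with h2 | h2
    · rw [hueven s h2]; constructor <;> linarith [h.1, h.2]
    · rw [huodd s h2]; exact h
  have husum : ∀ s, 1 ≤ s → ∃ j : ℤ, 0 ≤ j ∧ j ≤ n ∧ u s + u (s+1) = m + n - 2*j := by
    intro s hs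
    obtain ⟨j, hj0, hj1, hj2⟩ := hrstep s hs
    rcases Nat.mod_two_eq_zero_or_one s with h2 | h2
    · rw [hueven s h2, huodd (s+1) (by omega)]
      exact ⟨n - j, by linarith, by linarith, by linarith⟩
    · rw [huodd s h2, hueven (s+1) (by omega)]
      exact ⟨j, hj0, hj1, by linarith⟩
  have hudiff : ∀ s, 1 ≤ s → u (s+1) - u s ≤ m - n ∧ u s - u (s+1) ≤ m - n := by
    intro s hs
    obtain ⟨hsum1, hsum2⟩ := hrsum s hs
    rcases Nat.mod_two_eq_zero_or_one s with h2 | h2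
    · rw [hueven s h2, huodd (s+1) (by omega)]
      constructor <;> linarith
    · rw [huodd s h2, hueven (s+1) (by omega)]
      constructor <;> linarith
  have hJ : ∀ s, 1 ≤ s → 0 ≤ (m+n-u s-u (s+1))/2 ∧ (m+n-u s-u (s+1))/2 ≤ n ∧
      2*((m+n-u s-u (s+1))/2) = m+n-u s-u (s+1) := by
    intro s hs
    obtain ⟨j, hj0, hj1, hj2⟩ := husum s hs
    omega
  have hu_ev : ∀ s, S ≤ s → u s = if s % 2 = 1 then a + b else m - n - a + b := by
    intro s hs
    have h := hS s hs
    rcases Nat.mod_two_eq_zero_or_one s with h2 | h2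
    · rw [hueven s h2, if_neg (by omega), h, if_neg (by omega)]; ring
    · rw [huodd s h2, if_pos (by omega), h, if_pos (by omega)]
  set A : ℕ → ℤ := fun t => if t % 2 = 1 then u ((t+1)/2) else m - u (t/2+1) with hAdef
  set p : ℕ → ℤ := fun t => if t = 0 then 0 else
    if t % 2 = 1 then (m+n-u ((t+1)/2) - u ((t+1)/2+1))/2 else u (t/2+1) with hpdef
  have hA_odd : ∀ s, 1 ≤ s → A (2*s-1) = u s := by
    intro s hs
    simp only [hAdef]
    rw [if_pos (by omega), show (2*s-1+1)/2 = s from by omega]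
  have hA_even : ∀ s, 1 ≤ s → A (2*s) = m - u (s+1) := by
    intro s hs
    simp only [hAdef]
    rw [if_neg (by omega), show (2*s)/2+1 = s+1 from by omega]
  have hp_odd : ∀ s, 1 ≤ s → p (2*s-1) = (m+n-u s-u (s+1))/2 := by
    intro s hs
    simp only [hpdef]
    rw [if_neg (by omega), if_pos (by omega), show (2*s-1+1)/2 = s from by omega]
  have hp_even : ∀ s, 1 ≤ s → p (2*s) = u (s+1) := by
    intro s hs
    simp only [hpdef]
    rw [if_neg (by omega), if_neg (by omega), show (2*s)/2+1 = s+1 from by omega]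
  have hrecA : ∀ t, 1 ≤ t → A t = A (t+1) + (if t % 2 = 1 then n else m) - 2 * p t := by
    intro t ht
    rcases Nat.mod_two_eq_zero_or_one t with h2 | h2
    · obtain ⟨s, hs1, rfl⟩ : ∃ s, 1 ≤ s ∧ t = 2*s := ⟨t/2, by omega, by omega⟩
      rw [if_neg (by omega), hA_even s hs1, hp_even s hs1,
          show 2*s+1 = 2*(s+1)-1 from by omega, hA_odd (s+1) (by omega)]
      ring
    · obtain ⟨s, hs1, rfl⟩ : ∃ s, 1 ≤ s ∧ t = 2*s-1 := ⟨(t+1)/2, by omega, by omega⟩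
      rw [if_pos (by omega), hA_odd s hs1, hp_odd s hs1,
          show 2*s-1+1 = 2*s from by omega, hA_even s hs1]
      have h2J := (hJ s hs1).2.2
      linarith
  have hAev : ∀ t, 2*S + 2 ≤ t → A t = abar m n a b t := by
    intro t ht
    rcases Nat.mod_two_eq_zero_or_one t with h2 | h2
    · obtain ⟨s, hs1, rfl⟩ : ∃ s, S + 1 ≤ s ∧ t = 2*s := ⟨t/2, by omega, by omega⟩
      rw [hA_even s (by omega), hu_ev (s+1) (by omega)]
      rcases Nat.mod_two_eq_zero_or_one s with h3 | h3
      · rw [if_pos (by omega)]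
        simp only [abar, show (2*s) % 4 = 0 from by omega]
        norm_num
        try ring
      · rw [if_neg (by omega)]
        simp only [abar, show (2*s) % 4 = 2 from by omega]
        norm_num
        try ring
    · obtain ⟨s, hs1, rfl⟩ : ∃ s, S + 1 ≤ s ∧ t = 2*s-1 := ⟨(t+1)/2, by omega, by omega⟩
      rw [hA_odd s (by omega), hu_ev s (by omega)]
      rcases Nat.mod_two_eq_zero_or_one s with h3 | h3
      · rw [if_neg (by omega)]
        simp only [abar, show (2*s-1) % 4 = 3 from by omega]
        norm_num
        try ring
      · rw [if_pos (by omega)]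
        simp only [abar, show (2*s-1) % 4 = 1 from by omega]
        norm_num
        try ring
  have hWA : IsWeightSeq m n a b p A := ⟨hrecA, 2*S+2, fun t ht => hAev t ht⟩
  have hp0 : p 0 = 0 := by simp [hpdef]
  have hpb : ∀ t, 1 ≤ t → 0 ≤ p t ∧ p t ≤ (if t % 2 = 1 then n else m) := by
    intro t ht
    rcases Nat.mod_two_eq_zero_or_one t with h2 | h2
    · obtain ⟨s, hs1, rfl⟩ : ∃ s, 1 ≤ s ∧ t = 2*s := ⟨t/2, by omega, by omega⟩
      rw [if_neg (by omega), hp_even s hs1]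
      exact hub (s+1) (by omega)
    · obtain ⟨s, hs1, rfl⟩ : ∃ s, 1 ≤ s ∧ t = 2*s-1 := ⟨(t+1)/2, by omega, by omega⟩
      rw [if_pos (by omega), hp_odd s hs1]
      exact ⟨(hJ s hs1).1, (hJ s hs1).2.1⟩
  have hpev : ∀ t, 2*S+2 ≤ t → p t = barp m n a b t := by
    intro t ht
    rcases Nat.mod_two_eq_zero_or_one t with h2 | h2
    · obtain ⟨s, hs1, rfl⟩ : ∃ s, S+1 ≤ s ∧ t = 2*s := ⟨t/2, by omega, by omega⟩
      rw [hp_even s (by omega), hu_ev (s+1) (by omega)]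
      rcases Nat.mod_two_eq_zero_or_one s with h3 | h3
      · rw [if_pos (by omega)]
        simp only [barp]
        rw [if_neg (by omega), if_pos (by omega)]
      · rw [if_neg (by omega)]
        simp only [barp]
        rw [if_neg (by omega), if_neg (by omega)]
    · obtain ⟨s, hs1, rfl⟩ : ∃ s, S+1 ≤ s ∧ t = 2*s-1 := ⟨(t+1)/2, by omega, by omega⟩
      rw [hp_odd s (by omega), hu_ev s (by omega), hu_ev (s+1) (by omega)]
      simp only [barp]
      rw [if_pos (show (2*s-1) % 2 = 1 from by omega)]
      rcases Nat.mod_two_eq_zero_or_one s with h3 | h3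
      · rw [if_neg (by omega), if_pos (by omega)]
        omega
      · rw [if_pos (by omega), if_neg (by omega)]
        omega
  have hadm : ∀ t, 1 ≤ t → p t ≤ A (t+1) ∧ (if t % 2 = 1 then n else m) - p t ≤ m - A (t+1) := by
    intro t ht
    rcases Nat.mod_two_eq_zero_or_one t with h2 | h2
    · obtain ⟨s, hs1, rfl⟩ : ∃ s, 1 ≤ s ∧ t = 2*s := ⟨t/2, by omega, by omega⟩
      rw [if_neg (by omega), hp_even s hs1, show 2*s+1 = 2*(s+1)-1 from by omega,
          hA_odd (s+1) (by omega)]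
      exact ⟨le_refl _, by linarith⟩
    · obtain ⟨s, hs1, rfl⟩ : ∃ s, 1 ≤ s ∧ t = 2*s-1 := ⟨(t+1)/2, by omega, by omega⟩
      rw [if_pos (by omega), hp_odd s hs1, show 2*s-1+1 = 2*s from by omega, hA_even s hs1]
      obtain ⟨hJ1, hJ2, hJ3⟩ := hJ s hs1
      obtain ⟨hd1, hd2⟩ := hudiff s hs1
      constructor <;> linarith
  have hrel : ∀ s, 1 ≤ s → r s = if s % 2 = 1 then A (2*s-1) else m - A (2*s-1) := by
    intro s hs
    rw [hA_odd s hs]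
    rcases Nat.mod_two_eq_zero_or_one s with h2 | h2
    · rw [if_neg (by omega), hueven s h2]; ring
    · rw [if_pos (by omega), huodd s h2]
  refine ⟨p, ⟨⟨⟨hp0, hpb, 2*S+2, hpev⟩, A, hWA, hadm⟩, hr0, A, hWA, hrel⟩, ?_⟩
  rintro p' ⟨⟨hp'path, A', hA', hc'⟩, _, A'', hA'', hrel''⟩
  have F' := adm_facts m n a b hp'path hA' hc'
  have hAA : ∀ s, 1 ≤ s → A' (2*s-1) = u s := by
    intro s hs
    have hw : A'' (2*s-1) = A' (2*s-1) := weight_unique m n a b hA'' hA' (by omega)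
    have h := hrel'' s hs
    rcases Nat.mod_two_eq_zero_or_one s with h2 | h2
    · rw [if_neg (by omega)] at h
      rw [hueven s h2]; linarith
    · rw [if_pos (by omega)] at h
      rw [huodd s h2]; linarith
  funext t
  rcases Nat.eq_zero_or_pos t with rfl | ht
  · rw [hp'path.1, hp0]
  rcases Nat.mod_two_eq_zero_or_one t with h2 | h2
  · obtain ⟨s, hs1, rfl⟩ : ∃ s, 1 ≤ s ∧ t = 2*s := ⟨t/2, by omega, by omega⟩
    obtain ⟨hpe, _⟩ := F' s hs1
    rw [hpe, hp_even s hs1, show 2*s+1 = 2*(s+1)-1 from by omega, hAA (s+1) (by omega)]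
  · obtain ⟨s, hs1, rfl⟩ : ∃ s, 1 ≤ s ∧ t = 2*s-1 := ⟨(t+1)/2, by omega, by omega⟩
    obtain ⟨_, hA2', hsum', _⟩ := F' s hs1
    rw [hp_odd s hs1]
    have e1 : A' (2*s-1) = u s := hAA s hs1
    have e2 : A' (2*s+1) = u (s+1) := by
      rw [show 2*s+1 = 2*(s+1)-1 from by omega]; exact hAA (s+1) (by omega)
    have h2J := (hJ s hs1).2.2
    linarith

end

/-- The map `p ↦ r_p` is a bijection from the set of admissible paths in `P_{a,b}` onto
`R_{a,b}`. -/
theorem stmt9 (m n a b : ℤ) (hmn : n < m) (hn : 1 ≤ n)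
    (ha0 : 0 ≤ a) (ha1 : a ≤ m - n) (hb0 : 0 ≤ b) (hb1 : b ≤ n) :
    (∀ p : ℕ → ℤ, IsAdmissiblePath m n a b p →
      ∃! r : ℕ → ℤ, InRSOS m n a b r ∧ RelR m n a b p r) ∧
    (∀ r : ℕ → ℤ, InRSOS m n a b r →
      ∃! p : ℕ → ℤ, IsAdmissiblePath m n a b p ∧ RelR m n a b p r) := by
  exact ⟨fun p hp => part1 m n a b p hp, fun r hr => part2 m n a b r hr⟩

end Stmt9
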